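/- Let A be a Noetherian integral domain, F = X² + aX + b ∈ A[X] irreducible over Frac(A), and B = A[X]/(F). Let p be a prime ideal of A with a ∉ p and b ∈ p, and let x denote the class of X in B. Then p₁ = pB + xB and p₂ = pB + (x+a)B are two distinct prime ideals of B lying over p, and B/p₁ ≅ A/p ≅ B/p₂. -/

import Mathlib

open Polynomial


theorem stmt_11_aux {A : Type} [CommRing A] [IsDomain A] (a b : A)
    (p : Ideal A) [p.IsPrime]
    (B : Type) [CommRing B] [Algebra A B]
    (e : (Polynomial A ⧸ Ideal.span {(X ^ 2 + C a * X + C b : Polynomial A)}) ≃ₐ[A] B)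
    (x : B) (hx : x = e (Ideal.Quotient.mk _ X))
    (r : A) (hr : r ^ 2 + a * r + b ∈ p) :
    ∃ φ : B →+* A ⧸ p, Function.Surjective φ ∧
      RingHom.ker φ = p.map (algebraMap A B) ⊔ Ideal.span {x - algebraMap A B r} ∧
      φ.comp (algebraMap A B) = Ideal.Quotient.mk p := by
  have hF : (aeval ((Ideal.Quotient.mk p) r) (X ^ 2 + C a * X + C b : Polynomial A)) = 0 := by
    have : ((Ideal.Quotient.mk p) (r ^ 2 + a * r + b)) = 0 :=
      Ideal.Quotient.eq_zero_iff_mem.mpr hr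
    simpa [map_add, map_mul, map_pow] using this
  have hker : ∀ q ∈ Ideal.span {(X ^ 2 + C a * X + C b : Polynomial A)},
      (aeval ((Ideal.Quotient.mk p) r)) q = 0 := by
    intro q hq
    rw [Ideal.mem_span_singleton] at hq
    obtain ⟨c, rfl⟩ := hq
    simp [map_mul, hF]
  let ψ : (Polynomial A ⧸ Ideal.span {(X ^ 2 + C a * X + C b : Polynomial A)}) →ₐ[A] A ⧸ p :=
    Ideal.Quotient.liftₐ _ (aeval ((Ideal.Quotient.mk p) r)) hker
  have hψ : ∀ q : Polynomial A, ψ (Ideal.Quotient.mk _ q) = Ideal.Quotient.mk p (q.eval r) := by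
    intro q
    show (aeval ((Ideal.Quotient.mk p) r)) q = _
    rw [aeval_def, Ideal.Quotient.algebraMap_eq, eval₂_at_apply]
  let Φ : B →ₐ[A] A ⧸ p := ψ.comp e.symm.toAlgHom
  have hΦmk : ∀ q : Polynomial A,
      Φ (e (Ideal.Quotient.mk _ q)) = Ideal.Quotient.mk p (q.eval r) := by
    intro q
    simp only [Φ, AlgHom.comp_apply, AlgEquiv.toAlgHom_eq_coe, AlgHom.coe_coe,
      AlgEquiv.symm_apply_apply]
    convert hψ q using 2
    exact e.symm_apply_apply _
  have hΦalg : ∀ c : A, Φ (algebraMap A B c) = Ideal.Quotient.mk p c := by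
    intro c
    rw [Φ.commutes, Ideal.Quotient.algebraMap_eq]
  refine ⟨Φ.toRingHom, ?_, ?_, ?_⟩
  · intro y
    obtain ⟨c, rfl⟩ := Ideal.Quotient.mk_surjective y
    exact ⟨algebraMap A B c, hΦalg c⟩
  · apply le_antisymm
    · intro y hy
      rw [RingHom.mem_ker] at hy
      replace hy : Φ y = 0 := hy
      obtain ⟨g, hg⟩ := Ideal.Quotient.mk_surjective (e.symm y)
      have hy' : y = e (Ideal.Quotient.mk _ g) := by
        rw [hg]; simp
      rw [hy', hΦmk] at hy
      have hgr : g.eval r ∈ p := Ideal.Quotient.eq_zero_iff_mem.mp hy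
      have hdvd : (X - C r) ∣ (g - C (g.eval r)) := by
        apply dvd_iff_isRoot.mpr
        simp [IsRoot]
      obtain ⟨d, hd⟩ := hdvd
      have hgdecomp : g = C (g.eval r) + (X - C r) * d := by
        linear_combination hd
      have hxr : e (Ideal.Quotient.mk _ (X - C r)) = x - algebraMap A B r := by
        rw [map_sub, map_sub, hx]
        congr 1
        have h1 : (Ideal.Quotient.mk (Ideal.span {(X ^ 2 + C a * X + C b : Polynomial A)})) (C r)
            = algebraMap A _ r := rfl
        rw [h1, e.commutes]
      have hy2 : y = algebraMap A B (g.eval r)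
          + (x - algebraMap A B r) * e (Ideal.Quotient.mk _ d) := by
        conv_lhs => rw [hy', hgdecomp]
        rw [map_add, map_mul, map_add, map_mul, hxr]
        congr 1
        have h1 : (Ideal.Quotient.mk (Ideal.span {(X ^ 2 + C a * X + C b : Polynomial A)}))
            (C (g.eval r)) = algebraMap A _ (g.eval r) := rfl
        rw [h1, e.commutes]
      rw [hy2]
      apply Ideal.add_mem
      · exact Ideal.mem_sup_left (Ideal.mem_map_of_mem _ hgr)
      · exact Ideal.mem_sup_right (Ideal.mul_mem_right _ _ (Ideal.subset_span rfl))
    · rw [sup_le_iff]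
      constructor
      · rw [Ideal.map_le_iff_le_comap]
        intro c hc
        rw [Ideal.mem_comap, RingHom.mem_ker]
        show Φ (algebraMap A B c) = 0
        rw [hΦalg]
        exact Ideal.Quotient.eq_zero_iff_mem.mpr hc
      · rw [Ideal.span_le, Set.singleton_subset_iff]
        rw [SetLike.mem_coe, RingHom.mem_ker]
        show Φ (x - algebraMap A B r) = 0
        rw [map_sub, hΦalg, hx]
        have h2 := hΦmk X
        rw [h2, eval_X, sub_self]
  · ext c
    exact hΦalg c

/-- Splitting of a prime `p` in `B = A[X]/(X²+aX+b)` when `a ∉ p`, `b ∈ p` and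
`F = X²+aX+b` is irreducible over `Frac(A)`: writing `x` for the class of `X`,
the ideals `p₁ = pB + xB` and `p₂ = pB + (x+a)B` are two distinct prime ideals of
`B` lying over `p`, and `B/p₁ ≅ A/p ≅ B/p₂`. -/
theorem stmt_11 {A : Type} [CommRing A] [IsNoetherianRing A] [IsDomain A]
    (a b : A)
    (hirr : Irreducible ((X ^ 2 + C a * X + C b : Polynomial A).map
      (algebraMap A (FractionRing A))))
    (p : Ideal A) [p.IsPrime] (ha : a ∉ p) (hb : b ∈ p)
    (B : Type) [CommRing B] [Algebra A B]
    (e : (Polynomial A ⧸ Ideal.span {(X ^ 2 + C a * X + C b : Polynomial A)}) ≃ₐ[A] B)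
    (x : B) (hx : x = e (Ideal.Quotient.mk _ X))
    (p₁ p₂ : Ideal B)
    (hp₁ : p₁ = p.map (algebraMap A B) ⊔ Ideal.span {x})
    (hp₂ : p₂ = p.map (algebraMap A B) ⊔ Ideal.span {x + algebraMap A B a}) :
    p₁ ≠ p₂ ∧ p₁.IsPrime ∧ p₂.IsPrime ∧
    p₁.comap (algebraMap A B) = p ∧ p₂.comap (algebraMap A B) = p ∧
    Nonempty ((B ⧸ p₁) ≃+* A ⧸ p) ∧ Nonempty ((B ⧸ p₂) ≃+* A ⧸ p) := by
  have hr₁ : (0:A) ^ 2 + a * 0 + b ∈ p := by simpa using hb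
  have hr₂ : (-a) ^ 2 + a * (-a) + b ∈ p := by
    have h : (-a) ^ 2 + a * (-a) + b = b := by ring
    rw [h]; exact hb
  obtain ⟨φ₁, hs₁, hk₁, hc₁⟩ := stmt_11_aux a b p B e x hx 0 hr₁
  obtain ⟨φ₂, hs₂, hk₂, hc₂⟩ := stmt_11_aux a b p B e x hx (-a) hr₂
  have hp₁' : p₁ = RingHom.ker φ₁ := by
    rw [hp₁, hk₁, map_zero, sub_zero]
  have hp₂' : p₂ = RingHom.ker φ₂ := by
    rw [hp₂, hk₂, map_neg, sub_neg_eq_add]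
  have hcomap : ∀ (q : Ideal B) (φ : B →+* A ⧸ p), q = RingHom.ker φ →
      φ.comp (algebraMap A B) = Ideal.Quotient.mk p → q.comap (algebraMap A B) = p := by
    intro q φ hq hφ
    ext c
    rw [hq, Ideal.mem_comap, RingHom.mem_ker, ← RingHom.comp_apply, hφ]
    exact Ideal.Quotient.eq_zero_iff_mem
  have hcm₁ : p₁.comap (algebraMap A B) = p := hcomap p₁ φ₁ hp₁' hc₁
  have hcm₂ : p₂.comap (algebraMap A B) = p := hcomap p₂ φ₂ hp₂' hc₂
  refine ⟨?_, ?_, ?_, hcm₁, hcm₂, ?_, ?_⟩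
  · intro h
    have hx₁ : x ∈ p₁ := by
      rw [hp₁]; exact Ideal.mem_sup_right (Ideal.subset_span rfl)
    have hx₂ : x + algebraMap A B a ∈ p₁ := by
      rw [h, hp₂]; exact Ideal.mem_sup_right (Ideal.subset_span rfl)
    have haB : algebraMap A B a ∈ p₁ := by
      have := Ideal.sub_mem p₁ hx₂ hx₁
      simpa using this
    have : a ∈ p := by rw [← hcm₁]; exact haB
    exact ha this
  · rw [hp₁']; exact RingHom.ker_isPrime φ₁
  · rw [hp₂']; exact RingHom.ker_isPrime φ₂
  · exact ⟨(Ideal.quotEquivOfEq hp₁').trans (RingHom.quotientKerEquivOfSurjective hs₁)⟩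
  · exact ⟨(Ideal.quotEquivOfEq hp₂').trans (RingHom.quotientKerEquivOfSurjective hs₂)⟩
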